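/- For any instance of Pm||∑w_jC_j, there exists a WSPT schedule σ whose deviation vector satisfies |Δ_{i,ℓ}| ≤ p_max for all 1 ≤ i ≤ k and 1 ≤ ℓ ≤ m, and consequently g(σ) ≤ m·w_max·p_max². -/

import Mathlib

section Greedy
variable {n m : ℕ} [NeZero m]

noncomputable def pick (L : Fin m → ℚ) : Fin m :=
  (Finset.exists_min_image Finset.univ L Finset.univ_nonempty).choose

lemma pick_le (L : Fin m → ℚ) (ℓ : Fin m) : L (pick L) ≤ L ℓ :=
  (Finset.exists_min_image Finset.univ L Finset.univ_nonempty).choose_spec.2 ℓ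
    (Finset.mem_univ ℓ)

noncomputable def go (p : Fin n → ℕ) :
    List (Fin n) → (Fin m → ℚ) × (Fin n → Fin m) → (Fin m → ℚ) × (Fin n → Fin m)
  | [], s => s
  | j :: rest, s =>
      go p rest (fun ℓ => s.1 ℓ + if ℓ = pick s.1 then (p j : ℚ) else 0,
        Function.update s.2 j (pick s.1))

lemma go_append (p : Fin n → ℕ) (l₁ l₂ : List (Fin n)) (s : (Fin m → ℚ) × (Fin n → Fin m)) :
    go p (l₁ ++ l₂) s = go p l₂ (go p l₁ s) := by
  induction l₁ generalizing s with
  | nil => rfl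
  | cons a t ih =>
    simp only [List.cons_append, go]
    exact ih _

lemma go_snd_not_mem (p : Fin n → ℕ) (l : List (Fin n)) (j : Fin n) (hj : j ∉ l) (s : (Fin m → ℚ) × (Fin n → Fin m)) :
    (go p l s).2 j = s.2 j := by
  induction l generalizing s with
  | nil => rfl
  | cons a t ih =>
    have hja : j ≠ a := fun h => hj (h ▸ (List.mem_cons_self (a := a) (l := t)))
    have hjt : j ∉ t := fun h => hj (List.mem_cons_of_mem a h)
    simp only [go]
    rw [ih hjt]
    simp [Function.update_of_ne hja]

lemma go_spread (p : Fin n → ℕ) (pm : ℚ) (hpm : ∀ j, (p j : ℚ) ≤ pm)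
    (l : List (Fin n)) (s : (Fin m → ℚ) × (Fin n → Fin m)) (h : ∀ a b, s.1 a - s.1 b ≤ pm) :
    ∀ a b, (go p l s).1 a - (go p l s).1 b ≤ pm := by
  induction l generalizing s with
  | nil => exact h
  | cons j t ih =>
    refine ih _ ?_
    intro a b
    have h0 : (0 : ℚ) ≤ pm := by have := h a a; linarith
    have hpj : (0 : ℚ) ≤ (p j : ℚ) := Nat.cast_nonneg _
    have hab := h a b
    have hpb := pick_le s.1 b
    have hpmj := hpm j
    show s.1 a + (if a = pick s.1 then (p j : ℚ) else 0)
        - (s.1 b + (if b = pick s.1 then (p j : ℚ) else 0)) ≤ pm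
    by_cases ha : a = pick s.1 <;> by_cases hb : b = pick s.1
    · rw [if_pos ha, if_pos hb]; linarith
    · rw [if_pos ha, if_neg hb, ha]; linarith
    · rw [if_neg ha, if_pos hb]; linarith
    · rw [if_neg ha, if_neg hb]; linarith

lemma go_fst (p : Fin n → ℕ) (l : List (Fin n)) (hl : l.Nodup) (s : (Fin m → ℚ) × (Fin n → Fin m)) (ℓ : Fin m) :
    (go p l s).1 ℓ = s.1 ℓ +
      ∑ j ∈ l.toFinset.filter (fun j => (go p l s).2 j = ℓ), (p j : ℚ) := by
  classical
  induction l generalizing s with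
  | nil => simp [go]; exact Finset.sum_empty
  | cons j t ih =>
    obtain ⟨hj, hnd⟩ := List.nodup_cons.mp hl
    have hmem : j ∉ t.toFinset := by simpa using hj
    set s' : (Fin m → ℚ) × (Fin n → Fin m) :=
      (fun ℓ => s.1 ℓ + if ℓ = pick s.1 then (p j : ℚ) else 0,
        Function.update s.2 j (pick s.1)) with hs'
    have hgo : go p (j :: t) s = go p t s' := rfl
    have hσj : (go p t s').2 j = pick s.1 := by
      rw [go_snd_not_mem p t j hj]; simp [hs']
    rw [hgo, ih hnd]
    have htf : (j :: t).toFinset = insert j t.toFinset := by simp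
    rw [htf, Finset.filter_insert]
    by_cases hc : (go p t s').2 j = ℓ
    · rw [if_pos hc, Finset.sum_insert (by simp [hmem])]
      have : s'.1 ℓ = s.1 ℓ + (p j : ℚ) := by
        simp [hs', if_pos (by rw [← hσj, hc] : ℓ = pick s.1)]
      rw [this]; ring
    · rw [if_neg hc]
      have : s'.1 ℓ = s.1 ℓ := by
        have : ℓ ≠ pick s.1 := by rw [← hσj]; exact fun h => hc h.symm
        simp [hs', if_neg this]
      rw [this]

lemma sorted_split {α : Type*} (P : α → Prop) (r : α → α → Prop)
    (hPr : ∀ a b, r a b → P b → P a) (l : List α) (hl : l.Pairwise r) :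
    ∃ l₁ l₂, l = l₁ ++ l₂ ∧ (∀ x ∈ l₁, P x) ∧ (∀ x ∈ l₂, ¬ P x) := by
  classical
  induction l with
  | nil => exact ⟨[], [], rfl, by simp, by simp⟩
  | cons a t ih =>
    obtain ⟨hat, ht⟩ := List.pairwise_cons.mp hl
    by_cases hPa : P a
    · obtain ⟨l₁, l₂, he, h1, h2⟩ := ih ht
      exact ⟨a :: l₁, l₂, by rw [he]; rfl,
        by rintro x hx; rcases List.mem_cons.mp hx with rfl | hx; exacts [hPa, h1 x hx], h2⟩
    · refine ⟨[], a :: t, rfl, by simp, ?_⟩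
      rintro x hx
      rcases List.mem_cons.mp hx with rfl | hx
      · exact hPa
      · exact fun hPx => hPa (hPr a x (hat x hx) hPx)

end Greedy



/-- Total processing time of jobs with efficiency at least `t` assigned to machine `ℓ`
by the assignment `σ` (in a WSPT schedule the job order on each machine is by
non-increasing efficiency, so the assignment determines the schedule). -/
def mLoad {n m : ℕ} (p w : Fin n → ℕ) (σ : Fin n → Fin m) (t : ℚ) (ℓ : Fin m) : ℚ :=
  ∑ j ∈ Finset.univ.filter (fun j => t ≤ (w j : ℚ) / (p j : ℚ) ∧ σ j = ℓ), (p j : ℚ)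

/-- Total processing time of all jobs with efficiency at least `t`. -/
def totLoad {n : ℕ} (p w : Fin n → ℕ) (t : ℚ) : ℚ :=
  ∑ j ∈ Finset.univ.filter (fun j => t ≤ (w j : ℚ) / (p j : ℚ)), (p j : ℚ)

/-- The deviation `Δ_{i,ℓ} = μ_i − P(J₁^ℓ ∪ ⋯ ∪ J_i^ℓ)` at efficiency threshold `t`. -/
def dev {n m : ℕ} (p w : Fin n → ℕ) (σ : Fin n → Fin m) (t : ℚ) (ℓ : Fin m) : ℚ :=
  totLoad p w t / m - mLoad p w σ t ℓ

/-- Goemans–Williamson expression for the total weighted completion time of the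
WSPT schedule determined by the assignment `σ`, where `e 0 > e 1 > ⋯ > e (k-1)` are
the distinct efficiencies and `e k = 0`. -/
def fObj {n m : ℕ} (p w : Fin n → ℕ) (e : ℕ → ℚ) (k : ℕ) (σ : Fin n → Fin m) : ℚ :=
  (∑ i ∈ Finset.range k, (e i - e (i + 1)) * ∑ ℓ : Fin m, (mLoad p w σ (e i) ℓ) ^ 2
    + ∑ j : Fin n, (w j : ℚ) * (p j : ℚ)) / 2

/-- The function `g(σ) = ∑_i (e_(i) − e_(i+1)) ∑_ℓ Δ_{i,ℓ}²`. -/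
def gObj {n m : ℕ} (p w : Fin n → ℕ) (e : ℕ → ℚ) (k : ℕ) (σ : Fin n → Fin m) : ℚ :=
  ∑ i ∈ Finset.range k, (e i - e (i + 1)) * ∑ ℓ : Fin m, (dev p w σ (e i) ℓ) ^ 2


theorem stmt_13 (m k n pmax wmax : ℕ) (hm : 0 < m) (hk : 0 < k)
    (p w : Fin n → ℕ)
    (hp : ∀ j, 0 < p j) (hpmax : ∀ j, p j ≤ pmax)
    (hw : ∀ j, 0 < w j) (hwmax : ∀ j, w j ≤ wmax)
    (e : ℕ → ℚ) (hdec : ∀ i < k, e (i + 1) < e i) (hek : e k = 0)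
    (hcov : ∀ j, ∃ i < k, (w j : ℚ) / (p j : ℚ) = e i)
    (hrng : ∀ i < k, ∃ j, (w j : ℚ) / (p j : ℚ) = e i) :
    ∃ σ : Fin n → Fin m,
      (∀ i < k, ∀ ℓ : Fin m, |dev p w σ (e i) ℓ| ≤ (pmax : ℚ)) ∧
      gObj p w e k σ ≤ (m : ℚ) * (wmax : ℚ) * (pmax : ℚ) ^ 2 := by
  classical
  haveI : NeZero m := ⟨hm.ne'⟩
  set eff : Fin n → ℚ := fun j => (w j : ℚ) / (p j : ℚ) with heff
  set le : Fin n → Fin n → Bool := fun a b => decide (eff b ≤ eff a) with hle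
  set l : List (Fin n) := (List.finRange n).mergeSort le with hl
  have hperm : l.Perm (List.finRange n) := List.mergeSort_perm _ _
  have hnd : l.Nodup := hperm.nodup_iff.mpr (List.nodup_finRange n)
  have hsort : l.Pairwise (fun a b => eff b ≤ eff a) := by
    have h := List.pairwise_mergeSort (le := le)
      (fun a b c hab hbc =>
        decide_eq_true (le_trans (of_decide_eq_true hbc) (of_decide_eq_true hab)))
      (fun a b => by
        rcases le_total (eff b) (eff a) with h | h
        · simp [hle, h]
        · simp [hle, h])
      (List.finRange n)
    exact h.imp (fun hab => of_decide_eq_true hab)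
  have hmem : ∀ j, j ∈ l := fun j => hperm.mem_iff.mpr (List.mem_finRange j)
  set s₀ : (Fin m → ℚ) × (Fin n → Fin m) :=
    (fun _ => 0, fun _ => (⟨0, hm⟩ : Fin m)) with hs₀
  set σ : Fin n → Fin m := (go p l s₀).2 with hσ
  have key : ∀ i < k, ∀ ℓ : Fin m, |dev p w σ (e i) ℓ| ≤ (pmax : ℚ) := by
    intro i hi ℓ
    obtain ⟨l₁, l₂, hsplit, h1, h2⟩ := sorted_split (fun j => e i ≤ eff j)
      (fun a b => eff b ≤ eff a)
      (fun a b hab hPb => le_trans hPb hab) l hsort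
    have hnd1 : l₁.Nodup := ((hsplit ▸ hnd : (l₁ ++ l₂).Nodup)).of_append_left
    have hdisj : ∀ j ∈ l₁, j ∉ l₂ := by
      intro j hj1 hj2
      exact (List.nodup_append'.mp (hsplit ▸ hnd)).2.2 hj1 hj2
    have hmem1 : ∀ j, j ∈ l₁ ↔ e i ≤ eff j := by
      intro j
      constructor
      · exact h1 j
      · intro hP
        have := hmem j
        rw [hsplit, List.mem_append] at this
        rcases this with h | h
        · exact h
        · exact absurd hP (h2 j h)
    have hagree : ∀ j ∈ l₁, σ j = (go p l₁ s₀).2 j := by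
      intro j hj
      rw [hσ, hsplit, go_append]
      exact go_snd_not_mem p l₂ j (hdisj j hj) _
    set L : Fin m → ℚ := (go p l₁ s₀).1 with hL
    have hload : ∀ ℓ' : Fin m, mLoad p w σ (e i) ℓ' = L ℓ' := by
      intro ℓ'
      rw [mLoad, hL, go_fst p l₁ hnd1 s₀ ℓ']
      have hsets : Finset.univ.filter (fun j => e i ≤ (w j : ℚ) / (p j : ℚ) ∧ σ j = ℓ')
          = l₁.toFinset.filter (fun j => (go p l₁ s₀).2 j = ℓ') := by
        ext j
        simp only [Finset.mem_filter, Finset.mem_univ, true_and, List.mem_toFinset]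
        constructor
        · rintro ⟨hPj, hσj⟩
          have hj1 : j ∈ l₁ := (hmem1 j).mpr hPj
          exact ⟨hj1, by rw [← hagree j hj1]; exact hσj⟩
        · rintro ⟨hj1, hσj⟩
          exact ⟨(hmem1 j).mp hj1, by rw [hagree j hj1]; exact hσj⟩
      rw [hsets]
      simp [hs₀]
    have htot : totLoad p w (e i) = ∑ ℓ' : Fin m, L ℓ' := by
      rw [totLoad]
      rw [← Finset.sum_fiberwise (Finset.univ.filter
        (fun j => e i ≤ (w j : ℚ) / (p j : ℚ))) σ (fun j => (p j : ℚ))]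
      refine Finset.sum_congr rfl fun ℓ' _ => ?_
      rw [← hload ℓ', mLoad, Finset.filter_filter]
    have hspread : ∀ a b : Fin m, L a - L b ≤ (pmax : ℚ) := by
      rw [hL]
      refine go_spread p (pmax : ℚ) (fun j => by exact_mod_cast hpmax j) l₁ s₀ ?_
      intro a b
      simp [hs₀]
    have hdev : dev p w σ (e i) ℓ = (∑ ℓ' : Fin m, (L ℓ' - L ℓ)) / m := by
      rw [dev, htot, hload, Finset.sum_sub_distrib, Finset.sum_const,
        Finset.card_univ, Fintype.card_fin]
      have hm0 : (m : ℚ) ≠ 0 := Nat.cast_ne_zero.mpr hm.ne'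
      field_simp
      rw [nsmul_eq_mul]
    rw [hdev, abs_div, abs_of_nonneg (by positivity : (0:ℚ) ≤ (m:ℚ))]
    rw [div_le_iff₀ (by exact_mod_cast hm)]
    calc |∑ ℓ' : Fin m, (L ℓ' - L ℓ)| ≤ ∑ ℓ' : Fin m, |L ℓ' - L ℓ| :=
          Finset.abs_sum_le_sum_abs _ _
      _ ≤ ∑ _ℓ' : Fin m, (pmax : ℚ) := by
          refine Finset.sum_le_sum fun ℓ' _ => ?_
          rw [abs_le]
          exact ⟨by linarith [hspread ℓ ℓ'], hspread ℓ' ℓ⟩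
      _ = (pmax : ℚ) * m := by
          rw [Finset.sum_const, Finset.card_univ, Fintype.card_fin, nsmul_eq_mul]
          ring
  refine ⟨σ, key, ?_⟩
  · have hsum : gObj p w e k σ ≤ ∑ i ∈ Finset.range k,
        (e i - e (i + 1)) * ((m : ℚ) * (pmax : ℚ) ^ 2) := by
      rw [gObj]
      refine Finset.sum_le_sum fun i hi => ?_
      have hik := Finset.mem_range.mp hi
      have hfac : 0 ≤ e i - e (i + 1) := le_of_lt (sub_pos.mpr (hdec i hik))
      refine mul_le_mul_of_nonneg_left ?_ hfac
      calc ∑ ℓ : Fin m, dev p w σ (e i) ℓ ^ 2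
          ≤ ∑ _ℓ : Fin m, (pmax : ℚ) ^ 2 := by
            refine Finset.sum_le_sum fun ℓ _ => ?_
            have h := key i hik ℓ
            calc dev p w σ (e i) ℓ ^ 2 = |dev p w σ (e i) ℓ| ^ 2 := (sq_abs _).symm
              _ ≤ (pmax : ℚ) ^ 2 := by
                  exact pow_le_pow_left₀ (abs_nonneg _) h 2
        _ = (m : ℚ) * (pmax : ℚ) ^ 2 := by
            rw [Finset.sum_const, Finset.card_univ, Fintype.card_fin, nsmul_eq_mul]
    have htel : ∑ i ∈ Finset.range k, (e i - e (i + 1)) = e 0 := by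
      rw [Finset.sum_range_sub' e k, hek, sub_zero]
    have he0 : e 0 ≤ (wmax : ℚ) := by
      obtain ⟨j, hj⟩ := hrng 0 hk
      rw [← hj]
      calc (w j : ℚ) / (p j : ℚ) ≤ (w j : ℚ) := by
            apply div_le_self (Nat.cast_nonneg _)
            exact_mod_cast hp j
        _ ≤ (wmax : ℚ) := by exact_mod_cast hwmax j
    calc gObj p w e k σ ≤ ∑ i ∈ Finset.range k,
            (e i - e (i + 1)) * ((m : ℚ) * (pmax : ℚ) ^ 2) := hsum
      _ = e 0 * ((m : ℚ) * (pmax : ℚ) ^ 2) := by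
          rw [← Finset.sum_mul, htel]
      _ ≤ (wmax : ℚ) * ((m : ℚ) * (pmax : ℚ) ^ 2) := by
          refine mul_le_mul_of_nonneg_right he0 (by positivity)
      _ = (m : ℚ) * (wmax : ℚ) * (pmax : ℚ) ^ 2 := by ring
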